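/- Let K be an imaginary quadratic field and 𝔞 a nonzero fractional ideal of O_K, embedded in ℂ. Then for s > 1, N(𝔞)^s · Σ_{ξ ∈ 𝔞, ξ≠0} |ξ|^{-2s} = #(O_K^×) · Σ over integral ideals I in the ideal class of 𝔞^{-1} of N(I)^{-s}. (Nonzero elements ξ of 𝔞 up to units correspond bijectively to integral ideals I with I·𝔞 = (ξ).) -/

import Mathlib

open NumberField Complex

open scoped Classical in
lemma univ_embeddings {K : Type*} [Field K] [NumberField K] (σ : K →+* ℂ)
    (hdeg : Module.finrank ℚ K = 2)
    (him : ∃ x : K, (σ x).im ≠ 0) :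
    (Finset.univ : Finset (K →+* ℂ)) = {σ, (starRingEnd ℂ).comp σ} := by
  have hne : σ ≠ (starRingEnd ℂ).comp σ := by
    intro h
    obtain ⟨x, hx⟩ := him
    have := congrArg (fun f : K →+* ℂ => (f x).im) h
    simp only [RingHom.coe_comp, Function.comp_apply, Complex.conj_im] at this
    exact hx (by linarith)
  symm
  apply Finset.eq_univ_of_card
  rw [Finset.card_insert_of_notMem (by simpa using hne), Finset.card_singleton,
    NumberField.Embeddings.card K ℂ, hdeg]

open scoped Classical in
lemma norm_eq_abs_sq {K : Type*} [Field K] [NumberField K] (σ : K →+* ℂ)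
    (hdeg : Module.finrank ℚ K = 2)
    (him : ∃ x : K, (σ x).im ≠ 0) (ξ : K) :
    ((Algebra.norm ℚ ξ : ℚ) : ℝ) = ‖σ ξ‖ ^ 2 := by
  have hne : σ ≠ (starRingEnd ℂ).comp σ := by
    intro h
    obtain ⟨x, hx⟩ := him
    have := congrArg (fun f : K →+* ℂ => (f x).im) h
    simp only [RingHom.coe_comp, Function.comp_apply, Complex.conj_im] at this
    exact hx (by linarith)
  have h := Algebra.norm_eq_prod_embeddings ℚ ℂ ξ
  rw [show ∏ φ : K →ₐ[ℚ] ℂ, φ ξ = ∏ φ : K →+* ℂ, φ ξ from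
    (Fintype.prod_equiv (RingHom.equivRatAlgHom K ℂ) _ _ fun φ => rfl).symm,
    univ_embeddings σ hdeg him, Finset.prod_pair hne] at h
  simp only [RingHom.coe_comp, Function.comp_apply] at h
  rw [Complex.mul_conj] at h
  have : (((Algebra.norm ℚ ξ : ℚ) : ℝ) : ℂ) = ((‖σ ξ‖ ^ 2 : ℝ) : ℂ) := by
    rw [Complex.sq_norm,
      show (((Algebra.norm ℚ ξ : ℚ):ℝ):ℂ) = algebraMap ℚ ℂ (Algebra.norm ℚ ξ) by push_cast; simp]
    exact h
  exact_mod_cast this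

lemma units_finite {K : Type*} [Field K] [NumberField K] (σ : K →+* ℂ)
    (hdeg : Module.finrank ℚ K = 2)
    (him : ∃ x : K, (σ x).im ≠ 0) : Finite (𝓞 K)ˣ := by
  classical
  have habs : ∀ u : (𝓞 K)ˣ, ∀ φ : K →+* ℂ, ‖φ ((u : 𝓞 K) : K)‖ ≤ 1 := by
    intro u φ
    have hn : |(Algebra.norm ℚ (((u : 𝓞 K) : K)) : ℚ)| = 1 := by
      have := NumberField.isUnit_iff_norm.mp u.isUnit
      rwa [RingOfIntegers.coe_norm] at this
    have h1 : ‖σ ((u : 𝓞 K) : K)‖ ^ 2 = 1 := by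
      have := norm_eq_abs_sq σ hdeg him ((u : 𝓞 K) : K)
      have h2 : |((Algebra.norm ℚ (((u : 𝓞 K) : K)) : ℚ) : ℝ)| = 1 := by
        rw [← Rat.cast_abs, hn]; norm_num
      rw [this] at h2
      rwa [_root_.abs_of_nonneg (by positivity)] at h2
    have hσ : ‖σ ((u : 𝓞 K) : K)‖ = 1 := by
      nlinarith [norm_nonneg (σ ((u : 𝓞 K) : K))]
    have hφ : φ ∈ (Finset.univ : Finset (K →+* ℂ)) := Finset.mem_univ _
    rw [univ_embeddings σ hdeg him] at hφ
    simp only [Finset.mem_insert, Finset.mem_singleton] at hφ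
    rcases hφ with rfl | rfl
    · simpa using hσ.le
    · simpa using hσ.le
  have hfin := NumberField.Embeddings.finite_of_norm_le K ℂ 1
  haveI := hfin.to_subtype
  refine Finite.of_injective (fun u : (𝓞 K)ˣ =>
    (⟨((u : 𝓞 K) : K), ⟨NumberField.RingOfIntegers.isIntegral_coe _, habs u⟩⟩ :
      {x : K | IsIntegral ℤ x ∧ ∀ φ : K →+* ℂ, ‖φ x‖ ≤ 1})) ?_
  intro u v h
  simp only [Subtype.mk_eq_mk] at h
  exact Units.ext (by exact_mod_cast h)


open scoped ENNReal in
lemma tsum_ofReal_toReal {ι : Type*} (f : ι → ℝ) (hf : ∀ i, 0 ≤ f i) :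
    ∑' i, f i = (∑' i, ENNReal.ofReal (f i)).toReal := by
  by_cases h : Summable f
  · rw [← ENNReal.ofReal_tsum_of_nonneg hf h, ENNReal.toReal_ofReal (tsum_nonneg hf)]
  · rw [tsum_eq_zero_of_not_summable h]
    have h2 : ∑' i, ENNReal.ofReal (f i) = (⊤ : ℝ≥0∞) := by
      by_contra hne
      exact h ((ENNReal.summable_toReal hne).congr fun i => ENNReal.toReal_ofReal (hf i))
    rw [h2]; simp

/-- For an imaginary quadratic field `K` embedded in `ℂ`, a nonzero fractional ideal `𝔞`
and `s > 1`:
`N(𝔞)^s · Σ_{0 ≠ ξ ∈ 𝔞} |ξ|^{-2s} = #(O_K^×) · Σ_{I integral, in the class of 𝔞⁻¹} N(I)^{-s}`. -/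
theorem partial_zeta_of_ideal_class
    (K : Type*) [Field K] [NumberField K]
    (hdeg : Module.finrank ℚ K = 2)
    (σ : K →+* ℂ) (him : ∃ x : K, (σ x).im ≠ 0)
    (𝔞 : FractionalIdeal (nonZeroDivisors (𝓞 K)) K) (h𝔞 : 𝔞 ≠ 0)
    (s : ℝ) (hs : 1 < s) :
    ((FractionalIdeal.absNorm 𝔞 : ℝ) ^ s) *
        (∑' ξ : {x : K // x ∈ 𝔞 ∧ x ≠ 0}, ‖σ (ξ : K)‖ ^ (-(2 * s)))
      = (Nat.card (𝓞 K)ˣ : ℝ) *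
        ∑' I : {I : Ideal (𝓞 K) // I ≠ ⊥ ∧ ∃ ξ : K, ξ ≠ 0 ∧
            (I : FractionalIdeal (nonZeroDivisors (𝓞 K)) K) * 𝔞 =
              FractionalIdeal.spanSingleton (nonZeroDivisors (𝓞 K)) ξ},
          (Ideal.absNorm (I : Ideal (𝓞 K)) : ℝ) ^ (-s) := by
  classical
  haveI : Finite (𝓞 K)ˣ := units_finite σ hdeg him
  haveI : Fintype (𝓞 K)ˣ := Fintype.ofFinite _
  -- the map from nonzero elements of 𝔞 to integral ideals in the class of 𝔞⁻¹
  have hle : ∀ ξ : {x : K // x ∈ 𝔞 ∧ x ≠ 0},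
      FractionalIdeal.spanSingleton (nonZeroDivisors (𝓞 K)) (ξ : K) * 𝔞⁻¹ ≤ 1 := by
    intro ξ
    have h1 : FractionalIdeal.spanSingleton (nonZeroDivisors (𝓞 K)) (ξ : K) ≤ 𝔞 :=
      FractionalIdeal.spanSingleton_le_iff_mem.mpr ξ.2.1
    calc FractionalIdeal.spanSingleton (nonZeroDivisors (𝓞 K)) (ξ : K) * 𝔞⁻¹ ≤ 𝔞 * 𝔞⁻¹ :=
          mul_le_mul_left h1 _
      _ = 1 := mul_inv_cancel₀ h𝔞
  choose I0 hI0 using fun ξ : {x : K // x ∈ 𝔞 ∧ x ≠ 0} =>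
    FractionalIdeal.le_one_iff_exists_coeIdeal.mp (hle ξ)
  have hmul : ∀ ξ : {x : K // x ∈ 𝔞 ∧ x ≠ 0},
      ((I0 ξ : Ideal (𝓞 K)) : FractionalIdeal (nonZeroDivisors (𝓞 K)) K) * 𝔞 =
      FractionalIdeal.spanSingleton (nonZeroDivisors (𝓞 K)) (ξ : K) := by
    intro ξ
    rw [hI0, mul_assoc, inv_mul_cancel₀ h𝔞, mul_one]
  have hbot : ∀ ξ : {x : K // x ∈ 𝔞 ∧ x ≠ 0}, I0 ξ ≠ ⊥ := by
    intro ξ h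
    have h2 := hmul ξ
    rw [h] at h2
    simp only [FractionalIdeal.coeIdeal_bot, zero_mul] at h2
    exact ξ.2.2 (FractionalIdeal.spanSingleton_eq_zero_iff.mp h2.symm)
  set Φ : {x : K // x ∈ 𝔞 ∧ x ≠ 0} → {I : Ideal (𝓞 K) // I ≠ ⊥ ∧ ∃ ξ : K, ξ ≠ 0 ∧
      (I : FractionalIdeal (nonZeroDivisors (𝓞 K)) K) * 𝔞 =
        FractionalIdeal.spanSingleton (nonZeroDivisors (𝓞 K)) ξ} :=
    fun ξ => ⟨I0 ξ, hbot ξ, ξ, ξ.2.2, hmul ξ⟩ with hΦ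
  -- positivity of the norms
  have hNa : (0:ℝ) < (FractionalIdeal.absNorm 𝔞 : ℝ) := by
    rcases lt_or_eq_of_le (FractionalIdeal.absNorm_nonneg 𝔞) with h | h
    · exact_mod_cast h
    · exact absurd (FractionalIdeal.absNorm_eq_zero_iff.mp h.symm) h𝔞
  have hNI : ∀ b : {I : Ideal (𝓞 K) // I ≠ ⊥ ∧ ∃ ξ : K, ξ ≠ 0 ∧
      (I : FractionalIdeal (nonZeroDivisors (𝓞 K)) K) * 𝔞 =
        FractionalIdeal.spanSingleton (nonZeroDivisors (𝓞 K)) ξ},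
      (0:ℝ) < (Ideal.absNorm (b : Ideal (𝓞 K)) : ℝ) := by
    intro b
    have h3 := Nat.pos_of_ne_zero (fun h => b.2.1 (Ideal.absNorm_eq_zero_iff.mp h))
    exact_mod_cast h3
  -- key norm identity
  have hnorm : ∀ ξ : {x : K // x ∈ 𝔞 ∧ x ≠ 0},
      (Ideal.absNorm (I0 ξ) : ℝ) * (FractionalIdeal.absNorm 𝔞 : ℝ)
      = ‖σ (ξ:K)‖ ^ 2 := by
    intro ξ
    have h := congrArg FractionalIdeal.absNorm (hmul ξ)
    rw [map_mul, FractionalIdeal.coeIdeal_absNorm,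
      FractionalIdeal.absNorm_span_singleton] at h
    have h2 : ((|Algebra.norm ℚ (ξ:K)| : ℚ) : ℝ) = ‖σ (ξ:K)‖ ^ 2 := by
      rw [Rat.cast_abs, norm_eq_abs_sq σ hdeg him, _root_.abs_of_nonneg (by positivity)]
    rw [← h2]
    exact_mod_cast congrArg (Rat.cast (K := ℝ)) h
  -- the termwise identity
  have hterm : ∀ ξ : {x : K // x ∈ 𝔞 ∧ x ≠ 0}, (FractionalIdeal.absNorm 𝔞 : ℝ) ^ s *
      ‖σ (ξ:K)‖ ^ (-(2 * s)) = (Ideal.absNorm ((Φ ξ : _) : Ideal (𝓞 K)) : ℝ) ^ (-s) := by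
    intro ξ
    have habs : (0:ℝ) < ‖σ (ξ:K)‖ := by
      simpa [norm_pos_iff, map_ne_zero] using ξ.2.2
    have hI : (0:ℝ) < (Ideal.absNorm (I0 ξ) : ℝ) := hNI (Φ ξ)
    have h1 : ‖σ (ξ:K)‖ ^ (-(2 * s)) = (‖σ (ξ:K)‖ ^ 2) ^ (-s) := by
      rw [← Real.rpow_natCast (‖σ (ξ:K)‖) 2, ← Real.rpow_mul habs.le]
      norm_num
    show _ = (Ideal.absNorm (I0 ξ) : ℝ) ^ (-s)
    rw [h1, ← hnorm ξ, Real.mul_rpow hI.le hNa.le, Real.rpow_neg hNa.le]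
    have h2 : (FractionalIdeal.absNorm 𝔞 : ℝ) ^ s ≠ 0 := (Real.rpow_pos_of_pos hNa s).ne'
    field_simp
  -- fibers of Φ are in bijection with the unit group
  haveI hNoZero : NoZeroSMulDivisors (𝓞 K) K :=
    ⟨fun {c x} h => by
      rw [Algebra.smul_def, mul_eq_zero] at h
      exact h.imp_left fun h' => (IsFractionRing.injective (𝓞 K) K) (by simpa using h')⟩
  have hfib : ∀ b, Nonempty ((𝓞 K)ˣ ≃ {ξ : {x : K // x ∈ 𝔞 ∧ x ≠ 0} // Φ ξ = b}) := by
    intro b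
    obtain ⟨hIb, ξ₀, hξ₀, hspan⟩ := b.2
    have hξ₀mem : ξ₀ ∈ 𝔞 := by
      rw [← FractionalIdeal.spanSingleton_le_iff_mem, ← hspan]
      calc ((b : Ideal (𝓞 K)) : FractionalIdeal (nonZeroDivisors (𝓞 K)) K) * 𝔞 ≤ 1 * 𝔞 :=
            mul_le_mul_left FractionalIdeal.coeIdeal_le_one _
        _ = 𝔞 := one_mul _
    have hkey : ∀ ξ : {x : K // x ∈ 𝔞 ∧ x ≠ 0}, Φ ξ = b ↔
        FractionalIdeal.spanSingleton (nonZeroDivisors (𝓞 K)) (ξ:K) =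
          FractionalIdeal.spanSingleton (nonZeroDivisors (𝓞 K)) ξ₀ := by
      intro ξ
      constructor
      · intro h
        rw [← hmul ξ, ← hspan]
        congr 1
        rw [show I0 ξ = ((Φ ξ : _) : Ideal (𝓞 K)) from rfl, h]
      · intro h
        have h3 : ((I0 ξ : Ideal (𝓞 K)) : FractionalIdeal (nonZeroDivisors (𝓞 K)) K) =
            ((b : Ideal (𝓞 K)) : FractionalIdeal (nonZeroDivisors (𝓞 K)) K) := by
          have h2 : ((I0 ξ : Ideal (𝓞 K)) : FractionalIdeal (nonZeroDivisors (𝓞 K)) K) * 𝔞 =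
              ((b : Ideal (𝓞 K)) : FractionalIdeal (nonZeroDivisors (𝓞 K)) K) * 𝔞 := by
            rw [hmul ξ, hspan, h]
          exact mul_right_cancel₀ h𝔞 h2
        exact Subtype.ext (FractionalIdeal.coeIdeal_injective h3)
    have hcoe_ne : ∀ u : (𝓞 K)ˣ, ((u : 𝓞 K) : K) ≠ 0 := by
      intro u h
      have h9 : (u : 𝓞 K) = 0 := by
        apply IsFractionRing.injective (𝓞 K) K
        simpa using h
      exact u.ne_zero h9
    let e : (𝓞 K)ˣ → {ξ : {x : K // x ∈ 𝔞 ∧ x ≠ 0} // Φ ξ = b} := fun u =>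
      ⟨⟨((u : 𝓞 K) : K) * ξ₀, by
          have h4 : ((u : 𝓞 K) : K) * ξ₀ = (u : 𝓞 K) • ξ₀ := (Algebra.smul_def _ _).symm
          rw [h4]
          exact Submodule.smul_mem _ _ hξ₀mem, mul_ne_zero (hcoe_ne u) hξ₀⟩, by
        rw [hkey, FractionalIdeal.spanSingleton_eq_spanSingleton]
        refine ⟨u⁻¹, ?_⟩
        rw [Units.smul_def, Algebra.smul_def]
        show (((u⁻¹ : (𝓞 K)ˣ) : 𝓞 K) : K) * (((u : 𝓞 K) : K) * ξ₀) = ξ₀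
        rw [← mul_assoc]
        have h5 : (((u⁻¹ : (𝓞 K)ˣ) : 𝓞 K) : K) * ((u : 𝓞 K) : K) = 1 := by
          have : ((u⁻¹ : (𝓞 K)ˣ) : 𝓞 K) * ((u : 𝓞 K)) = 1 := by
            exact_mod_cast u.inv_mul
          calc (((u⁻¹ : (𝓞 K)ˣ) : 𝓞 K) : K) * ((u : 𝓞 K) : K)
              = ((((u⁻¹ : (𝓞 K)ˣ) : 𝓞 K) * ((u : 𝓞 K))) : 𝓞 K) := by push_cast; ring
            _ = 1 := by rw [this]; simp
        rw [h5, one_mul]⟩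
    have hinj : Function.Injective e := by
      intro u v h
      have h2 : ((u : 𝓞 K) : K) * ξ₀ = ((v : 𝓞 K) : K) * ξ₀ := by
        have h6 := congrArg (fun x : {ξ : {x : K // x ∈ 𝔞 ∧ x ≠ 0} // Φ ξ = b} =>
          ((x : {x : K // x ∈ 𝔞 ∧ x ≠ 0}) : K)) h
        simpa [e] using h6
      have h7 := mul_right_cancel₀ hξ₀ h2
      have h8 : (u : 𝓞 K) = (v : 𝓞 K) := (IsFractionRing.injective (𝓞 K) K) (by exact_mod_cast h7)
      exact Units.ext h8
    have hsurj : Function.Surjective e := by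
      intro x
      have hx := (hkey x).mp x.2
      rw [FractionalIdeal.spanSingleton_eq_spanSingleton] at hx
      obtain ⟨z, hz⟩ := hx
      refine ⟨z⁻¹, ?_⟩
      apply Subtype.ext
      apply Subtype.ext
      show (((z⁻¹ : (𝓞 K)ˣ) : 𝓞 K) : K) * ξ₀ = ((x : {x : K // x ∈ 𝔞 ∧ x ≠ 0}) : K)
      rw [← hz, Units.smul_def, Algebra.smul_def, ← mul_assoc]
      have h5 : (((z⁻¹ : (𝓞 K)ˣ) : 𝓞 K) : K) * ((z : 𝓞 K) : K) = 1 := by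
        have : ((z⁻¹ : (𝓞 K)ˣ) : 𝓞 K) * ((z : 𝓞 K)) = 1 := by exact_mod_cast z.inv_mul
        calc (((z⁻¹ : (𝓞 K)ˣ) : 𝓞 K) : K) * ((z : 𝓞 K) : K)
            = ((((z⁻¹ : (𝓞 K)ˣ) : 𝓞 K) * ((z : 𝓞 K))) : 𝓞 K) := by push_cast; ring
          _ = 1 := by rw [this]; simp
      rw [show (algebraMap (𝓞 K) K) ((z : (𝓞 K)ˣ) : 𝓞 K) = (((z : (𝓞 K)ˣ) : 𝓞 K) : K) from rfl,
        h5, one_mul]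
    exact ⟨Equiv.ofBijective e ⟨hinj, hsurj⟩⟩
  -- now the summation argument, through ℝ≥0∞
  have hnn : ∀ b : {I : Ideal (𝓞 K) // I ≠ ⊥ ∧ ∃ ξ : K, ξ ≠ 0 ∧
      (I : FractionalIdeal (nonZeroDivisors (𝓞 K)) K) * 𝔞 =
        FractionalIdeal.spanSingleton (nonZeroDivisors (𝓞 K)) ξ},
      (0:ℝ) ≤ (Ideal.absNorm (b : Ideal (𝓞 K)) : ℝ) ^ (-s) :=
    fun b => Real.rpow_nonneg (hNI b).le _
  rw [← tsum_mul_left, tsum_congr hterm, tsum_ofReal_toReal _ (fun ξ => hnn (Φ ξ)),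
    tsum_ofReal_toReal _ hnn]
  set G := fun b : {I : Ideal (𝓞 K) // I ≠ ⊥ ∧ ∃ ξ : K, ξ ≠ 0 ∧
      (I : FractionalIdeal (nonZeroDivisors (𝓞 K)) K) * 𝔞 =
        FractionalIdeal.spanSingleton (nonZeroDivisors (𝓞 K)) ξ} =>
    ENNReal.ofReal ((Ideal.absNorm (b : Ideal (𝓞 K)) : ℝ) ^ (-s)) with hG
  have hmain : (∑' ξ, G (Φ ξ)) = (Nat.card (𝓞 K)ˣ : ENNReal) * ∑' b, G b := by
    rw [← (Equiv.sigmaFiberEquiv Φ).tsum_eq (fun ξ => G (Φ ξ)), ENNReal.tsum_sigma']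
    refine Eq.trans ?_ ENNReal.tsum_mul_left
    refine tsum_congr fun a => ?_
    obtain ⟨eq⟩ := hfib a
    have h1 : ∀ x : {ξ // Φ ξ = a}, G (Φ ((Equiv.sigmaFiberEquiv Φ) ⟨a, x⟩)) = G a :=
      fun x => by rw [show (Equiv.sigmaFiberEquiv Φ) ⟨a, x⟩ = (x : _) from rfl, x.2]
    rw [tsum_congr h1, ← eq.tsum_eq (fun _ => G a), tsum_fintype, Finset.sum_const,
      Finset.card_univ, Nat.card_eq_fintype_card, nsmul_eq_mul]
  rw [hmain, ENNReal.toReal_mul]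
  simp
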